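/- Fix θ ∈ (−π/4, π/4) with θ ≠ 0, and in the Lie algebra s = s(θ) let A be the subspace spanned by v_1, v and B the subspace spanned by v_2, v_3, v_4, v. Then s is the central sum of A and B: A is an ideal of s, s = A + B, and A ∩ B is contained in Z(A) ∩ Z(B), where Z(A) and Z(B) denote the centers of the Lie algebras A and B. -/
import Mathlib


noncomputable section

/-!
The Lie algebra `s(θ)` of the Swanson model: the 5-dimensional complex Lie algebra
with basis `v₁, v₂, v₃, v₄, v` and brackets `[v₁,v₂] = [v₃,v₄] = v`,
`[v₁,v₄] = [v₃,v₂] = cos(2θ)·v`, `[v₁,v₃] = [v₄,v₂] = −i·sin(2θ)·v`, `[v,vⱼ] = 0`.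
-/

/-- The underlying vector space of the Swanson Lie algebra `s(θ)`: a pair consisting
of the coordinates along `v₁, v₂, v₃, v₄` and the coordinate along `v`. -/
def SwAlg (_θ : ℝ) : Type := (Fin 4 → ℂ) × ℂ

namespace SwAlg

variable {θ : ℝ}

instance : AddCommGroup (SwAlg θ) := inferInstanceAs (AddCommGroup ((Fin 4 → ℂ) × ℂ))
instance : Module ℂ (SwAlg θ) := inferInstanceAs (Module ℂ ((Fin 4 → ℂ) × ℂ))

/-- The alternating form encoding the structure constants of `s(θ)`. -/
def omega (θ : ℝ) (x y : (Fin 4 → ℂ) × ℂ) : ℂ :=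
  ((x.1 0 * y.1 1 - x.1 1 * y.1 0) + (x.1 2 * y.1 3 - x.1 3 * y.1 2)) +
    (Real.cos (2 * θ) : ℂ) *
      ((x.1 0 * y.1 3 - x.1 3 * y.1 0) + (x.1 2 * y.1 1 - x.1 1 * y.1 2)) +
    (-Complex.I * (Real.sin (2 * θ) : ℂ)) *
      ((x.1 0 * y.1 2 - x.1 2 * y.1 0) + (x.1 3 * y.1 1 - x.1 1 * y.1 3))

/-- The bracket of `s(θ)`: it takes values in the central line spanned by `v`. -/
def br (θ : ℝ) (x y : (Fin 4 → ℂ) × ℂ) : (Fin 4 → ℂ) × ℂ := ((0 : Fin 4 → ℂ), omega θ x y)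

lemma br_add_left (x y z : (Fin 4 → ℂ) × ℂ) : br θ (x + y) z = br θ x z + br θ y z := by
  simp only [br, omega, Prod.mk_add_mk, Prod.fst_add, Pi.add_apply, Prod.mk.injEq]
  constructor
  · simp
  · ring

lemma br_add_right (x y z : (Fin 4 → ℂ) × ℂ) : br θ x (y + z) = br θ x y + br θ x z := by
  simp only [br, omega, Prod.mk_add_mk, Prod.fst_add, Pi.add_apply, Prod.mk.injEq]
  constructor
  · simp
  · ring

lemma br_self (x : (Fin 4 → ℂ) × ℂ) : br θ x x = 0 := by
  simp only [br, omega]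
  have h : (0 : (Fin 4 → ℂ) × ℂ) = ((0 : Fin 4 → ℂ), (0 : ℂ)) := rfl
  rw [h, Prod.mk.injEq]
  constructor
  · rfl
  · ring

lemma br_leibniz (x y z : (Fin 4 → ℂ) × ℂ) :
    br θ x (br θ y z) = br θ (br θ x y) z + br θ y (br θ x z) := by
  simp only [br, omega, Prod.mk_add_mk, Pi.zero_apply, Prod.mk.injEq]
  constructor
  · simp
  · ring

lemma br_smul (c : ℂ) (x y : (Fin 4 → ℂ) × ℂ) : br θ x (c • y) = c • br θ x y := by
  simp only [br, omega, Prod.smul_mk, Prod.smul_fst, Pi.smul_apply, smul_eq_mul, smul_zero]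
  rw [Prod.mk.injEq]
  constructor
  · rfl
  · ring

instance : LieRing (SwAlg θ) where
  bracket x y := br θ x y
  add_lie x y z := br_add_left x y z
  lie_add x y z := br_add_right x y z
  lie_self x := br_self x
  leibniz_lie x y z := br_leibniz x y z

instance : LieAlgebra ℂ (SwAlg θ) where
  lie_smul c x y := br_smul c x y

/-- The basis vector `v₁`. -/
def v1 : SwAlg θ := ((Pi.single 0 1 : Fin 4 → ℂ), (0 : ℂ))
/-- The basis vector `v₂`. -/
def v2 : SwAlg θ := ((Pi.single 1 1 : Fin 4 → ℂ), (0 : ℂ))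
/-- The basis vector `v₃`. -/
def v3 : SwAlg θ := ((Pi.single 2 1 : Fin 4 → ℂ), (0 : ℂ))
/-- The basis vector `v₄`. -/
def v4 : SwAlg θ := ((Pi.single 3 1 : Fin 4 → ℂ), (0 : ℂ))
/-- The central basis vector `v`. -/
def vv : SwAlg θ := ((0 : Fin 4 → ℂ), (1 : ℂ))

end SwAlg


open SwAlg in
lemma bracket_eq {θ : ℝ} (x y : SwAlg θ) : ⁅x, y⁆ = SwAlg.omega θ x y • vv := by
  show ((0 : Fin 4 → ℂ), SwAlg.omega θ x y) =
    SwAlg.omega θ x y • (((0 : Fin 4 → ℂ), (1 : ℂ)) : (Fin 4 → ℂ) × ℂ)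
  simp [Prod.smul_mk]

lemma decomp_prod (x : (Fin 4 → ℂ) × ℂ) :
    x = x.1 0 • ((Pi.single 0 1 : Fin 4 → ℂ), (0 : ℂ)) +
      (x.1 1 • ((Pi.single 1 1 : Fin 4 → ℂ), (0 : ℂ)) +
        x.1 2 • ((Pi.single 2 1 : Fin 4 → ℂ), (0 : ℂ)) +
        x.1 3 • ((Pi.single 3 1 : Fin 4 → ℂ), (0 : ℂ)) +
        x.2 • ((0 : Fin 4 → ℂ), (1 : ℂ))) := by
  refine Prod.ext ?_ ?_
  · funext i
    fin_cases i <;> simp [Pi.single_apply]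
  · simp

lemma mem_B_fst {θ : ℝ} (x : SwAlg θ)
    (hx : x ∈ Submodule.span ℂ {SwAlg.v2, SwAlg.v3, SwAlg.v4, SwAlg.vv}) : x.1 0 = 0 := by
  induction hx using Submodule.span_induction with
  | mem z hz =>
    rcases hz with h | h | h | h <;> subst h <;>
      simp [SwAlg.v2, SwAlg.v3, SwAlg.v4, SwAlg.vv, Pi.single_apply]
  | zero => rfl
  | add a b _ _ ha hb => show a.1 0 + b.1 0 = 0; rw [ha, hb]; ring
  | smul c a _ ha => show c * a.1 0 = 0; rw [ha]; ring

lemma mem_A_fst {θ : ℝ} (x : SwAlg θ)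
    (hx : x ∈ Submodule.span ℂ {SwAlg.v1, SwAlg.vv}) :
    x.1 1 = 0 ∧ x.1 2 = 0 ∧ x.1 3 = 0 := by
  induction hx using Submodule.span_induction with
  | mem z hz =>
    rcases hz with h | h <;> subst h <;>
      refine ⟨?_, ?_, ?_⟩ <;> simp [SwAlg.v1, SwAlg.vv, Pi.single_apply]
  | zero => exact ⟨rfl, rfl, rfl⟩
  | add a b _ _ ha hb =>
    refine ⟨?_, ?_, ?_⟩ <;>
      · show _ + _ = (0 : ℂ)
        first
        | (rw [ha.1, hb.1]; ring)
        | (rw [ha.2.1, hb.2.1]; ring)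
        | (rw [ha.2.2, hb.2.2]; ring)
  | smul c a _ ha =>
    refine ⟨?_, ?_, ?_⟩ <;>
      · show c * _ = (0 : ℂ)
        first
        | (rw [ha.1]; ring)
        | (rw [ha.2.1]; ring)
        | (rw [ha.2.2]; ring)

open SwAlg in
/-- For `θ ∈ (−π/4, π/4)`, `θ ≠ 0`, `s(θ)` is the central sum of
`A` (the span of `v₁, v`) and `B` (the span of `v₂, v₃, v₄, v`): `A` is an ideal of
`s`, `s = A + B`, `B` is a subalgebra, and every element of `A ⊓ B` is central both in
`A` and in `B`. -/
theorem swanson_central_sum (θ : ℝ) (hθ₁ : -(Real.pi / 4) < θ)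
    (hθ₂ : θ < Real.pi / 4) (hθ₀ : θ ≠ 0) :
    ∀ A : Submodule ℂ (SwAlg θ), A = Submodule.span ℂ {v1, vv} →
    ∀ B : Submodule ℂ (SwAlg θ), B = Submodule.span ℂ {v2, v3, v4, vv} →
      (∀ x : SwAlg θ, ∀ y ∈ A, ⁅x, y⁆ ∈ A) ∧
      (∀ x ∈ B, ∀ y ∈ B, ⁅x, y⁆ ∈ B) ∧
      A ⊔ B = ⊤ ∧
      (∀ x ∈ A ⊓ B, (∀ y ∈ A, ⁅x, y⁆ = (0 : SwAlg θ)) ∧ (∀ y ∈ B, ⁅x, y⁆ = (0 : SwAlg θ))) := by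
  intro A hA B hB
  have hvvA : vv ∈ A := by rw [hA]; exact Submodule.subset_span (by simp)
  have hvvB : vv ∈ B := by rw [hB]; exact Submodule.subset_span (by simp)
  have hbr : ∀ x y : SwAlg θ, ⁅x, y⁆ ∈ A := fun x y => by
    rw [bracket_eq]; exact A.smul_mem _ hvvA
  have hbrB : ∀ x y : SwAlg θ, ⁅x, y⁆ ∈ B := fun x y => by
    rw [bracket_eq]; exact B.smul_mem _ hvvB
  refine ⟨fun x y _ => hbr x y, fun x _ y _ => hbrB x y, ?_, ?_⟩
  · rw [eq_top_iff]
    intro x _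
    have hx : x = x.1 0 • v1 + (x.1 1 • v2 + x.1 2 • v3 + x.1 3 • v4 + x.2 • vv) :=
      decomp_prod x
    rw [hx]
    refine Submodule.add_mem_sup ?_ ?_
    · rw [hA]; exact Submodule.smul_mem _ _ (Submodule.subset_span (by simp))
    · rw [hB]
      refine Submodule.add_mem _ (Submodule.add_mem _ (Submodule.add_mem _ ?_ ?_) ?_) ?_ <;>
        exact Submodule.smul_mem _ _ (Submodule.subset_span (by simp))
  · rintro x ⟨hxA, hxB⟩
    rw [hA] at hxA; rw [hB] at hxB
    have h0 : x.1 0 = 0 := mem_B_fst x hxB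
    obtain ⟨h1, h2, h3⟩ := mem_A_fst x hxA
    have hz : ∀ y : SwAlg θ, ⁅x, y⁆ = 0 := by
      intro y
      rw [bracket_eq]
      have : SwAlg.omega θ x y = 0 := by
        simp only [SwAlg.omega, h0, h1, h2, h3]; ring
      rw [this, zero_smul]
    exact ⟨fun y _ => hz y, fun y _ => hz y⟩
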